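/- Let 𝔗 be a nonempty set of total well-orderings on N that is closed in TO(N), and assume A is multiplicative on 𝔗. Then every left ideal L of A admits a 𝔗-universal Gröbner basis, i.e. a finite subset U ⊆ L that is a Gröbner basis of L with respect to every ≺ ∈ 𝔗. -/

import Mathlib

/-- A binary relation is a total ordering: antisymmetric, transitive, and total. -/
def IsTotalOrdering {S : Type*} (r : S → S → Prop) : Prop :=
  (∀ a b, r a b → r b a → a = b) ∧ (∀ a b c, r a b → r b c → r a c) ∧ (∀ a b, r a b ∨ r b a)

/-- The set `TO(S)` of all total orderings on `S`. -/
def TO (S : Type*) : Type _ := {r : S → S → Prop // IsTotalOrdering r}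

/-- The topology `𝒰(S)` on `TO(S)`, generated by the subbasis of all sets
`U_{(a,b)} = {≤ ∈ TO(S) : a ≤ b}`. -/
instance TOTopology (S : Type*) : TopologicalSpace (TO S) :=
  TopologicalSpace.generateFrom {U | ∃ a b : S, U = {r : TO S | r.1 a b}}
/-- Monomials of `K[X_1,…,X_t]`, identified with their exponent vectors `ν ∈ ℕ^t`. -/
abbrev Mon (t : ℕ) := Fin t →₀ ℕ

/-- `LM` is a leading-monomial function: for each total ordering `r` on monomials and each
nonzero polynomial `p`, `LM r p` is the `r`-maximal element of the support of `p`. -/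
def IsLM (K : Type*) [Field K] (t : ℕ)
    (LM : TO (Mon t) → MvPolynomial (Fin t) K → Mon t) : Prop :=
  ∀ (r : TO (Mon t)) (p : MvPolynomial (Fin t) K), p ≠ 0 →
    LM r p ∈ p.support ∧ ∀ m ∈ p.support, r.1 m (LM r p)

/-- The leading monomial ideal `LM_≤(E)` of a subset `E ⊆ K[X]`: the ideal generated by the
leading monomials of the nonzero elements of `E`. -/
noncomputable def LMideal (K : Type*) [Field K] (t : ℕ)
    (LM : TO (Mon t) → MvPolynomial (Fin t) K → Mon t)
    (r : TO (Mon t)) (E : Set (MvPolynomial (Fin t) K)) : Ideal (MvPolynomial (Fin t) K) :=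
  Ideal.span {q | ∃ e ∈ E, e ≠ 0 ∧ q = MvPolynomial.monomial (LM r e) (1 : K)}

/- `A` is an associative (not necessarily commutative) `K`-algebra and
`Φ : A ≃ₗ[K] K[X_1,…,X_t]` a `K`-module isomorphism, so `N = Φ⁻¹(M)` is a `K`-basis of `A`.
A total ordering `≺` on `N` is identified, via the bijection induced by `Φ`, with a total
ordering on the monomials of `K[X]`, i.e. on exponent vectors `Mon t`. -/

/-- The leading monomial ideal `LM_≺(H)` of a subset `H ⊆ A`: the ideal of `K[X]` generated by
the leading monomials (the `≺`-maximal monomials of the support of `Φ(h)`) of the nonzero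
elements `h ∈ H`. -/
noncomputable def LMAideal (K A : Type*) [Field K] [Ring A] [Algebra K A] (t : ℕ)
    (Φ : A ≃ₗ[K] MvPolynomial (Fin t) K)
    (LM : TO (Mon t) → MvPolynomial (Fin t) K → Mon t)
    (r : TO (Mon t)) (H : Set A) : Ideal (MvPolynomial (Fin t) K) :=
  Ideal.span {q | ∃ h ∈ H, h ≠ 0 ∧ q = MvPolynomial.monomial (LM r (Φ h)) (1 : K)}

/-- `A` is multiplicative on a set `𝔗` of total orderings: `A` is a domain and
`LM_≺(a·b) = LM_≺(a)·LM_≺(b)` (i.e. addition of exponent vectors) for all nonzero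
`a, b ∈ A` and all `≺ ∈ 𝔗`. -/
def MultOn (K A : Type*) [Field K] [Ring A] [Algebra K A] (t : ℕ)
    (Φ : A ≃ₗ[K] MvPolynomial (Fin t) K)
    (LM : TO (Mon t) → MvPolynomial (Fin t) K → Mon t)
    (T : Set (TO (Mon t))) : Prop :=
  (∀ a b : A, a ≠ 0 → b ≠ 0 → a * b ≠ 0) ∧
  (∀ r ∈ T, ∀ a b : A, a ≠ 0 → b ≠ 0 → LM r (Φ (a * b)) = LM r (Φ a) + LM r (Φ b))

/-- A total ordering is a (total) well-ordering: every nonempty subset has a minimum. -/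
def IsWO {S : Type*} (r : TO S) : Prop :=
  ∀ T : Set S, T.Nonempty → ∃ a ∈ T, ∀ b ∈ T, r.1 a b

/- ============================ Auxiliary material ============================ -/

section UGaux

variable {S : Type*}

lemma UG_total (r : TO S) (a b : S) : r.1 a b ∨ r.1 b a := r.2.2.2 a b

lemma UG_refl (r : TO S) (a : S) : r.1 a a := (r.2.2.2 a a).elim id id

lemma UG_antisymm (r : TO S) {a b : S} (h1 : r.1 a b) (h2 : r.1 b a) : a = b := r.2.1 a b h1 h2

lemma UG_trans (r : TO S) {a b c : S} (h1 : r.1 a b) (h2 : r.1 b c) : r.1 a c :=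
  r.2.2.1 a b c h1 h2

/-- The strict relation associated to a total ordering. -/
def UGlt (r : TO S) (a b : S) : Prop := r.1 a b ∧ a ≠ b

lemma UG_wf {r : TO S} (h : IsWO r) : WellFounded (UGlt r) := by
  rw [WellFounded.wellFounded_iff_has_min]
  intro s hs
  obtain ⟨m, hm, hmin⟩ := h s hs
  exact ⟨m, hm, fun x hx hlt => hlt.2 (UG_antisymm r hlt.1 (hmin x hx))⟩

lemma UG_isOpen_sub (a b : S) : IsOpen {r : TO S | r.1 a b} :=
  TopologicalSpace.GenerateOpen.basic _ ⟨a, b, rfl⟩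

/-- The set of boolean matrices that encode total orderings. -/
def UGOk (S : Type*) : Set (S × S → Bool) :=
  {f | (∀ a b : S, f (a, b) = true → f (b, a) = true → a = b) ∧
       (∀ a b c : S, f (a, b) = true → f (b, c) = true → f (a, c) = true) ∧
       (∀ a b : S, f (a, b) = true ∨ f (b, a) = true)}

lemma UG_isOpen_ev (p : S × S) : IsOpen {f : S × S → Bool | f p = true} := by
  have h : {f : S × S → Bool | f p = true} = (fun f : S × S → Bool => f p) ⁻¹' {true} := by
    ext f; simp
  rw [h]
  exact (isOpen_discrete _).preimage (continuous_apply p)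

lemma UG_isClosed_ev (p : S × S) : IsClosed {f : S × S → Bool | f p = true} := by
  have h : {f : S × S → Bool | f p = true} = (fun f : S × S → Bool => f p) ⁻¹' {true} := by
    ext f; simp
  rw [h]
  exact (isClosed_discrete _).preimage (continuous_apply p)

lemma UG_isClosed_ok (S : Type*) : IsClosed (UGOk S) := by
  have h1 : IsClosed {f : S × S → Bool | ∀ a b : S, f (a, b) = true → f (b, a) = true → a = b} := by
    have he : {f : S × S → Bool | ∀ a b : S, f (a, b) = true → f (b, a) = true → a = b}
        = ⋂ (a : S), ⋂ (b : S), {f : S × S → Bool | f (a, b) = true → f (b, a) = true → a = b} := by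
      ext f; simp
    rw [he]
    refine isClosed_iInter fun a => isClosed_iInter fun b => ?_
    by_cases hab : a = b
    · subst hab
      have he2 : {f : S × S → Bool | f (a, a) = true → f (a, a) = true → a = a} = Set.univ := by
        ext f; simp
      rw [he2]; exact isClosed_univ
    · have he2 : {f : S × S → Bool | f (a, b) = true → f (b, a) = true → a = b}
          = ({f : S × S → Bool | f (a, b) = true} ∩ {f : S × S → Bool | f (b, a) = true})ᶜ := by
        ext f
        simp only [Set.mem_setOf_eq, Set.mem_compl_iff, Set.mem_inter_iff]
        tauto
      rw [he2]
      exact ((UG_isOpen_ev _).inter (UG_isOpen_ev _)).isClosed_compl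
  have h2 : IsClosed {f : S × S → Bool |
      ∀ a b c : S, f (a, b) = true → f (b, c) = true → f (a, c) = true} := by
    have he : {f : S × S → Bool | ∀ a b c : S, f (a, b) = true → f (b, c) = true → f (a, c) = true}
        = ⋂ (a : S), ⋂ (b : S), ⋂ (c : S),
          {f : S × S → Bool | f (a, b) = true → f (b, c) = true → f (a, c) = true} := by
      ext f; simp
    rw [he]
    refine isClosed_iInter fun a => isClosed_iInter fun b => isClosed_iInter fun c => ?_
    have he2 : {f : S × S → Bool | f (a, b) = true → f (b, c) = true → f (a, c) = true}
        = ({f : S × S → Bool | f (a, b) = true} ∩ {f : S × S → Bool | f (b, c) = true}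
            ∩ {f : S × S → Bool | f (a, c) = true}ᶜ)ᶜ := by
      ext f
      simp only [Set.mem_setOf_eq, Set.mem_compl_iff, Set.mem_inter_iff]
      tauto
    rw [he2]
    exact (((UG_isOpen_ev _).inter (UG_isOpen_ev _)).inter (UG_isClosed_ev _).isOpen_compl).isClosed_compl
  have h3 : IsClosed {f : S × S → Bool | ∀ a b : S, f (a, b) = true ∨ f (b, a) = true} := by
    have he : {f : S × S → Bool | ∀ a b : S, f (a, b) = true ∨ f (b, a) = true}
        = ⋂ (a : S), ⋂ (b : S),
            ({f : S × S → Bool | f (a, b) = true} ∪ {f : S × S → Bool | f (b, a) = true}) := by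
      ext f; simp
    rw [he]
    exact isClosed_iInter fun a => isClosed_iInter fun b =>
      (UG_isClosed_ev _).union (UG_isClosed_ev _)
  have he : UGOk S = {f : S × S → Bool | ∀ a b : S, f (a, b) = true → f (b, a) = true → a = b}
      ∩ ({f : S × S → Bool | ∀ a b c : S, f (a, b) = true → f (b, c) = true → f (a, c) = true}
        ∩ {f : S × S → Bool | ∀ a b : S, f (a, b) = true ∨ f (b, a) = true}) := by
    ext f
    simp only [UGOk, Set.mem_setOf_eq, Set.mem_inter_iff]
  rw [he]
  exact h1.inter (h2.inter h3)

instance UG_compactSpace (S : Type*) : CompactSpace (TO S) := by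
  classical
  have hC : IsCompact (UGOk S) := (UG_isClosed_ok S).isCompact
  haveI : CompactSpace (UGOk S) := isCompact_iff_compactSpace.mp hC
  let d : UGOk S → TO S := fun f => ⟨fun a b => f.1 (a, b) = true, f.2⟩
  have hd : Continuous d := by
    apply continuous_generateFrom_iff.mpr
    rintro s ⟨a, b, rfl⟩
    have he : d ⁻¹' {r : TO S | r.1 a b}
        = (Subtype.val : UGOk S → (S × S → Bool)) ⁻¹' {f : S × S → Bool | f (a, b) = true} := rfl
    rw [he]
    exact (UG_isOpen_ev _).preimage continuous_subtype_val
  have hsurj : Function.Surjective d := by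
    intro r
    refine ⟨⟨fun p => decide (r.1 p.1 p.2), ?_, ?_, ?_⟩, ?_⟩
    · intro a b hab hba
      exact UG_antisymm r (of_decide_eq_true hab) (of_decide_eq_true hba)
    · intro a b c hab hbc
      exact decide_eq_true (UG_trans r (of_decide_eq_true hab) (of_decide_eq_true hbc))
    · intro a b
      rcases UG_total r a b with h | h
      · exact Or.inl (decide_eq_true h)
      · exact Or.inr (decide_eq_true h)
    · apply Subtype.ext
      funext a b
      exact propext ⟨of_decide_eq_true, decide_eq_true⟩
  refine ⟨?_⟩
  have hr : Set.range d = Set.univ := Set.range_eq_univ.mpr hsurj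
  rw [← hr]
  exact isCompact_range hd

end UGaux

section UGmain

open MvPolynomial

variable {K A : Type*} [Field K] [Ring A] [Algebra K A] {t : ℕ}
variable (Φ : A ≃ₗ[K] MvPolynomial (Fin t) K)
variable (LM : TO (Mon t) → MvPolynomial (Fin t) K → Mon t)

lemma UG_lm_mem (hLM : IsLM K t LM) (r : TO (Mon t)) {p : MvPolynomial (Fin t) K}
    (hp : p ≠ 0) : LM r p ∈ p.support := (hLM r p hp).1

lemma UG_lm_max (hLM : IsLM K t LM) (r : TO (Mon t)) {p : MvPolynomial (Fin t) K}
    (hp : p ≠ 0) {m : Mon t} (hm : m ∈ p.support) : r.1 m (LM r p) := (hLM r p hp).2 m hm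

lemma UG_lm_unique (hLM : IsLM K t LM) (r : TO (Mon t)) {p : MvPolynomial (Fin t) K}
    (hp : p ≠ 0) {μ : Mon t} (h1 : μ ∈ p.support) (h2 : ∀ m ∈ p.support, r.1 m μ) :
    LM r p = μ :=
  UG_antisymm r (h2 _ (UG_lm_mem LM hLM r hp)) (UG_lm_max LM hLM r hp h1)

lemma UG_lm_monomial (hLM : IsLM K t LM) (r : TO (Mon t)) {ν : Mon t} {c : K} (hc : c ≠ 0) :
    LM r (monomial ν c) = ν := by
  classical
  have hne : (monomial ν c : MvPolynomial (Fin t) K) ≠ 0 := by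
    simp [MvPolynomial.monomial_eq_zero, hc]
  apply UG_lm_unique LM hLM r hne
  · rw [support_monomial]; simp [hc]
  · intro m hm
    rw [support_monomial] at hm
    simp only [hc, if_false, Finset.mem_singleton] at hm
    subst hm
    exact UG_refl r _

lemma UG_lm_smul (hLM : IsLM K t LM) (r : TO (Mon t)) {k : K} (hk : k ≠ 0)
    {p : MvPolynomial (Fin t) K} (hp : p ≠ 0) : LM r (k • p) = LM r p := by
  have hsupp : (k • p).support = p.support := by
    ext m
    simp [MvPolynomial.mem_support_iff, MvPolynomial.coeff_smul, smul_eq_mul, hk]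
  have hkp : k • p ≠ 0 := smul_ne_zero hk hp
  exact UG_lm_unique LM hLM r hkp (hsupp ▸ UG_lm_mem LM hLM r hp)
    (fun m hm => UG_lm_max LM hLM r hp (hsupp ▸ hm))

/-- `x` is fully reduced modulo `G` with respect to `r`. -/
def UGRed (r : TO (Mon t)) (G : Finset A) (x : A) : Prop :=
  ∀ ν ∈ (Φ x).support, ∀ g ∈ G, ¬ LM r (Φ g) ≤ ν

/-- Products `b * g`, `g ∈ G`, whose leading monomial is bounded by `μ`. -/
def UGS (r : TO (Mon t)) (G : Finset A) (μ : Mon t) : Set A :=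
  {x | ∃ b g : A, g ∈ G ∧ b ≠ 0 ∧ x = b * g ∧ r.1 (LM r (Φ b) + LM r (Φ g)) μ}

/-- The division algorithm. -/
lemma UG_div (hLM : IsLM K t LM)
    (hdom : ∀ a b : A, a ≠ 0 → b ≠ 0 → a * b ≠ 0)
    (r : TO (Mon t)) (hwf : WellFounded (UGlt r))
    (hadd : ∀ a b : A, a ≠ 0 → b ≠ 0 → LM r (Φ (a * b)) = LM r (Φ a) + LM r (Φ b))
    (G : Finset A) (hG0 : (0 : A) ∉ G) (μ : Mon t) :
    ∀ a : A, a = 0 ∨ (a ≠ 0 ∧ r.1 (LM r (Φ a)) μ) →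
      ∃ s rem : A, a = s + rem ∧ s ∈ AddSubmonoid.closure (UGS Φ LM r G μ) ∧
        UGRed Φ LM r G rem := by
  have hΦ0 : ∀ x : A, Φ x ≠ 0 ↔ x ≠ 0 := fun x => not_congr (LinearEquiv.map_eq_zero_iff Φ)
  have hred0 : UGRed Φ LM r G 0 := by
    intro ν hν g hg
    rw [map_zero, MvPolynomial.support_zero] at hν
    exact absurd hν (Finset.notMem_empty ν)
  suffices H : ∀ ν : Mon t, ∀ a : A, a ≠ 0 → LM r (Φ a) = ν → r.1 ν μ →
      ∃ s rem : A, a = s + rem ∧ s ∈ AddSubmonoid.closure (UGS Φ LM r G μ) ∧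
        UGRed Φ LM r G rem by
    rintro a (rfl | ⟨ha, hle⟩)
    · exact ⟨0, 0, by simp, AddSubmonoid.zero_mem _, hred0⟩
    · exact H _ a ha rfl hle
  intro ν
  induction ν using hwf.induction with
  | _ ν IH =>
    intro a ha hlma hνμ
    have haΦ : Φ a ≠ 0 := (hΦ0 a).mpr ha
    have hamem : ν ∈ (Φ a).support := hlma ▸ UG_lm_mem LM hLM r haΦ
    have hamax : ∀ m ∈ (Φ a).support, r.1 m ν :=
      fun m hm => hlma ▸ UG_lm_max LM hLM r haΦ hm
    have hc0 : MvPolynomial.coeff ν (Φ a) ≠ 0 := MvPolynomial.mem_support_iff.mp hamem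
    by_cases hdvd : ∃ g ∈ G, LM r (Φ g) ≤ ν
    · obtain ⟨g, hgG, hgle⟩ := hdvd
      have hg0 : g ≠ 0 := fun h => hG0 (h ▸ hgG)
      obtain ⟨δ, hδ⟩ := le_iff_exists_add.mp hgle
      have hbΦ : Φ (Φ.symm (monomial δ (1 : K))) = monomial δ (1 : K) := Φ.apply_symm_apply _
      set b : A := Φ.symm (monomial δ (1 : K)) with hbdef
      have hb0 : b ≠ 0 := by
        intro h
        have h1 : (monomial δ (1 : K) : MvPolynomial (Fin t) K) = 0 := by
          rw [← hbΦ, h, map_zero]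
        exact one_ne_zero (MvPolynomial.monomial_eq_zero.mp h1)
      have hlmb : LM r (Φ b) = δ := by rw [hbΦ]; exact UG_lm_monomial LM hLM r one_ne_zero
      have hbg0 : b * g ≠ 0 := hdom _ _ hb0 hg0
      have hbgΦ : Φ (b * g) ≠ 0 := (hΦ0 _).mpr hbg0
      have hlmbg : LM r (Φ (b * g)) = ν := by
        rw [hadd b g hb0 hg0, hlmb, hδ, add_comm]
      have hd0 : MvPolynomial.coeff ν (Φ (b * g)) ≠ 0 :=
        MvPolynomial.mem_support_iff.mp (hlmbg ▸ UG_lm_mem LM hLM r hbgΦ)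
      set q : K := MvPolynomial.coeff ν (Φ a) / MvPolynomial.coeff ν (Φ (b * g)) with hq
      have hq0 : q ≠ 0 := div_ne_zero hc0 hd0
      set term : A := q • (b * g) with hterm
      have hterm0 : term ≠ 0 := smul_ne_zero hq0 hbg0
      have htermΦ : Φ term = q • Φ (b * g) := map_smul _ _ _
      have hlmterm : LM r (Φ term) = ν := by
        rw [htermΦ, UG_lm_smul LM hLM r hq0 hbgΦ, hlmbg]
      have htermmem : term ∈ UGS Φ LM r G μ := by
        refine ⟨q • b, g, hgG, smul_ne_zero hq0 hb0, by rw [hterm, smul_mul_assoc], ?_⟩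
        have h1 : LM r (Φ (q • b)) = δ := by
          rw [map_smul, UG_lm_smul LM hLM r hq0 ((hΦ0 b).mpr hb0), hlmb]
        have h2 : δ + LM r (Φ g) = ν := by rw [add_comm, ← hδ]
        rw [h1, h2]; exact hνμ
      have hcoefft : MvPolynomial.coeff ν (Φ term) = MvPolynomial.coeff ν (Φ a) := by
        rw [htermΦ, MvPolynomial.coeff_smul, smul_eq_mul, hq, div_mul_cancel₀ _ hd0]
      set a' : A := a - term with ha'
      have hkey : a = term + a' := by rw [ha']; abel
      by_cases ha'0 : a' = 0
      · exact ⟨term, 0, by rw [hkey, ha'0], AddSubmonoid.subset_closure htermmem, hred0⟩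
      · have ha'Φ : Φ a' ≠ 0 := (hΦ0 _).mpr ha'0
        have hsub : (Φ a').support ⊆ (Φ a).support ∪ (Φ term).support := by
          rw [ha', map_sub]
          exact MvPolynomial.support_sub _ _ _
        have hstrict : ∀ ρ ∈ (Φ a').support, UGlt r ρ ν := by
          intro ρ hρ
          constructor
          · rcases Finset.mem_union.mp (hsub hρ) with h | h
            · exact hamax ρ h
            · have h1 := UG_lm_max LM hLM r ((hΦ0 _).mpr hterm0) h
              rw [hlmterm] at h1
              exact h1
          · rintro rfl
            have hco : MvPolynomial.coeff ρ (Φ a') = 0 := by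
              rw [ha', map_sub, MvPolynomial.coeff_sub, hcoefft, sub_self]
            exact MvPolynomial.mem_support_iff.mp hρ hco
        have hltlm : UGlt r (LM r (Φ a')) ν := hstrict _ (UG_lm_mem LM hLM r ha'Φ)
        obtain ⟨s', rem', heq', hs', hrem'⟩ :=
          IH _ hltlm a' ha'0 rfl (UG_trans r hltlm.1 hνμ)
        exact ⟨term + s', rem', by rw [hkey, heq', add_assoc],
          AddSubmonoid.add_mem _ (AddSubmonoid.subset_closure htermmem) hs', hrem'⟩
    · push_neg at hdvd
      have hltΦ : Φ (Φ.symm (monomial ν (MvPolynomial.coeff ν (Φ a))))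
          = monomial ν (MvPolynomial.coeff ν (Φ a)) := Φ.apply_symm_apply _
      set lt : A := Φ.symm (monomial ν (MvPolynomial.coeff ν (Φ a))) with hltdef
      have hsupplt : (Φ lt).support ⊆ {ν} := by
        rw [hltΦ]
        exact MvPolynomial.support_monomial_subset
      have hredlt : ∀ x : A, UGRed Φ LM r G x → UGRed Φ LM r G (lt + x) := by
        intro x hx ρ hρ g hg
        have hρ2 : ρ ∈ (Φ lt).support ∪ (Φ x).support := by
          apply MvPolynomial.support_add
          rw [← map_add]
          exact hρ
        rcases Finset.mem_union.mp hρ2 with h | h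
        · have hρν : ρ = ν := by simpa using hsupplt h
          subst hρν
          exact hdvd g hg
        · exact hx ρ h g hg
      set a₂ : A := a - lt with ha₂
      have hkey : a = a₂ + lt := by rw [ha₂]; abel
      by_cases h2 : a₂ = 0
      · refine ⟨0, a, by rw [zero_add], AddSubmonoid.zero_mem _, ?_⟩
        have ha : a = lt + 0 := by rw [hkey, h2, zero_add, add_zero]
        rw [ha]
        exact hredlt 0 hred0
      · have ha₂Φ : Φ a₂ ≠ 0 := (hΦ0 _).mpr h2
        have hsub : (Φ a₂).support ⊆ (Φ a).support ∪ (Φ lt).support := by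
          rw [ha₂, map_sub]
          exact MvPolynomial.support_sub _ _ _
        have hstrict : ∀ ρ ∈ (Φ a₂).support, UGlt r ρ ν := by
          intro ρ hρ
          constructor
          · rcases Finset.mem_union.mp (hsub hρ) with h | h
            · exact hamax ρ h
            · have hρν : ρ = ν := by simpa using hsupplt h
              rw [hρν]; exact UG_refl r _
          · rintro rfl
            have hco : MvPolynomial.coeff ρ (Φ a₂) = 0 := by
              rw [ha₂, map_sub, MvPolynomial.coeff_sub, hltΦ, MvPolynomial.coeff_monomial]
              simp
            exact MvPolynomial.mem_support_iff.mp hρ hco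
        have hltlm : UGlt r (LM r (Φ a₂)) ν := hstrict _ (UG_lm_mem LM hLM r ha₂Φ)
        obtain ⟨s₂, rem₂, heq₂, hs₂, hrem₂⟩ :=
          IH _ hltlm a₂ h2 rfl (UG_trans r hltlm.1 hνμ)
        refine ⟨s₂, lt + rem₂, ?_, hs₂, hredlt rem₂ hrem₂⟩
        rw [hkey, heq₂]; abel

lemma UG_closure_coeff (hLM : IsLM K t LM)
    (hdom : ∀ a b : A, a ≠ 0 → b ≠ 0 → a * b ≠ 0)
    (r : TO (Mon t))
    (hadd : ∀ a b : A, a ≠ 0 → b ≠ 0 → LM r (Φ (a * b)) = LM r (Φ a) + LM r (Φ b))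
    (G : Finset A) (hG0 : (0 : A) ∉ G) (μ : Mon t) :
    ∀ s : A, s ∈ AddSubmonoid.closure (UGS Φ LM r G μ) →
      MvPolynomial.coeff μ (Φ s) ≠ 0 → ∃ g ∈ G, LM r (Φ g) ≤ μ := by
  have hΦ0 : ∀ x : A, Φ x ≠ 0 ↔ x ≠ 0 := fun x => not_congr (LinearEquiv.map_eq_zero_iff Φ)
  intro s hs
  refine AddSubmonoid.closure_induction
    (motive := fun x _ => MvPolynomial.coeff μ (Φ x) ≠ 0 → ∃ g ∈ G, LM r (Φ g) ≤ μ)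
    ?_ ?_ ?_ hs
  · rintro x ⟨b, g, hgG, hb0, rfl, hle⟩ hcx
    have hg0 : g ≠ 0 := fun h => hG0 (h ▸ hgG)
    have hbg0 : b * g ≠ 0 := hdom _ _ hb0 hg0
    have hμmem : μ ∈ (Φ (b * g)).support := MvPolynomial.mem_support_iff.mpr hcx
    have h1 : r.1 μ (LM r (Φ (b * g))) := UG_lm_max LM hLM r ((hΦ0 _).mpr hbg0) hμmem
    rw [hadd b g hb0 hg0] at h1
    have heq : LM r (Φ b) + LM r (Φ g) = μ := UG_antisymm r hle h1
    exact ⟨g, hgG, le_iff_exists_add.mpr ⟨LM r (Φ b), by rw [← heq, add_comm]⟩⟩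
  · intro h
    rw [map_zero] at h
    simp at h
  · intro x y _ _ ihx ihy h
    rw [map_add, MvPolynomial.coeff_add] at h
    by_cases h1 : MvPolynomial.coeff μ (Φ x) = 0
    · exact ihy fun h2 => h (by rw [h1, h2, add_zero])
    · exact ihx h1

lemma UG_closure_span (r : TO (Mon t)) (G : Finset A) (μ : Mon t) :
    AddSubmonoid.closure (UGS Φ LM r G μ) ≤ (Submodule.span A (G : Set A)).toAddSubmonoid := by
  rw [AddSubmonoid.closure_le]
  rintro x ⟨b, g, hgG, -, rfl, -⟩
  show b * g ∈ Submodule.span A (G : Set A)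
  rw [← smul_eq_mul]
  exact Submodule.smul_mem _ b (Submodule.subset_span hgG)

lemma UG_key (hLM : IsLM K t LM)
    (hdom : ∀ a b : A, a ≠ 0 → b ≠ 0 → a * b ≠ 0)
    (r : TO (Mon t)) (hwf : WellFounded (UGlt r))
    (hadd : ∀ a b : A, a ≠ 0 → b ≠ 0 → LM r (Φ (a * b)) = LM r (Φ a) + LM r (Φ b))
    (L : Submodule A A) (G : Finset A)
    (hG0 : (0 : A) ∉ G) (hGL : (G : Set A) ⊆ (L : Set A))
    (H : ∀ x ∈ L, x ≠ (0 : A) → ∃ g ∈ G, ∃ ξ ∈ (Φ x).support, LM r (Φ g) ≤ ξ) :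
    ∀ a ∈ L, a ≠ (0 : A) →
      a ∈ Submodule.span A (G : Set A) ∧ ∃ g ∈ G, LM r (Φ g) ≤ LM r (Φ a) := by
  intro a haL ha0
  obtain ⟨s, rem, heq, hs, hrem⟩ :=
    UG_div Φ LM hLM hdom r hwf hadd G hG0 (LM r (Φ a)) a (Or.inr ⟨ha0, UG_refl r _⟩)
  have hsspan : s ∈ Submodule.span A (G : Set A) := UG_closure_span Φ LM r G _ hs
  have hspanle : Submodule.span A (G : Set A) ≤ L := Submodule.span_le.mpr hGL
  have hremL : rem ∈ L := by
    have h1 : rem = a - s := by rw [heq]; abel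
    rw [h1]
    exact Submodule.sub_mem L haL (hspanle hsspan)
  have hrem0 : rem = 0 := by
    by_contra h0
    obtain ⟨g, hg, ξ, hξ, hle⟩ := H rem hremL h0
    exact hrem ξ hξ g hg hle
  rw [hrem0, add_zero] at heq
  constructor
  · rw [heq]; exact hsspan
  · refine UG_closure_coeff Φ LM hLM hdom r hadd G hG0 (LM r (Φ a)) s hs ?_
    rw [← heq]
    exact MvPolynomial.mem_support_iff.mp
      (UG_lm_mem LM hLM r (fun h => ha0 (Φ.map_eq_zero_iff.mp h)))

/-- Existence of a finite subset of `L` whose leading monomials generate `LM_r(L)`. -/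
lemma UG_exists_G (hLM : IsLM K t LM) (L : Submodule A A) (r : TO (Mon t)) :
    ∃ G : Finset A, (G : Set A) ⊆ (L : Set A) ∧ (0 : A) ∉ G ∧
      ∀ x ∈ L, x ≠ (0 : A) → ∃ g ∈ G, LM r (Φ g) ≤ LM r (Φ x) := by
  classical
  set E₀ : Set (Mon t) := {m | ∃ h ∈ L, h ≠ (0 : A) ∧ m = LM r (Φ h)} with hE₀
  set J : Ideal (MvPolynomial (Fin t) K) :=
    Ideal.span ((fun m => monomial m (1 : K)) '' E₀) with hJ
  have hfg : J.FG := IsNoetherian.noetherian J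
  obtain ⟨F, hF⟩ := hfg
  have hsub : ∀ x ∈ F, ∃ Tx : Finset (MvPolynomial (Fin t) K),
      ↑Tx ⊆ (fun m => monomial m (1 : K)) '' E₀ ∧
      x ∈ Submodule.span (MvPolynomial (Fin t) K) (Tx : Set (MvPolynomial (Fin t) K)) := by
    intro x hx
    have hxJ : x ∈ J := by
      rw [← hF]
      exact Ideal.subset_span hx
    exact Submodule.mem_span_finite_of_mem_span hxJ
  choose Tx hTx1 hTx2 using hsub
  set W : Finset (MvPolynomial (Fin t) K) := F.attach.biUnion (fun x => Tx x.1 x.2) with hW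
  have hWsub : (W : Set (MvPolynomial (Fin t) K)) ⊆ (fun m => monomial m (1 : K)) '' E₀ := by
    intro q hq
    rw [Finset.mem_coe, hW, Finset.mem_biUnion] at hq
    obtain ⟨x, -, hq⟩ := hq
    exact hTx1 x.1 x.2 hq
  have hJW : J = Ideal.span (W : Set (MvPolynomial (Fin t) K)) := by
    apply le_antisymm
    · rw [← hF]
      apply Ideal.span_le.mpr
      intro x hx
      have h1 : x ∈ Submodule.span (MvPolynomial (Fin t) K)
          ((W : Finset (MvPolynomial (Fin t) K)) : Set (MvPolynomial (Fin t) K)) := by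
        refine Submodule.span_mono ?_ (hTx2 x hx)
        intro q hq
        rw [Finset.mem_coe, hW, Finset.mem_biUnion]
        exact ⟨⟨x, hx⟩, F.mem_attach _, hq⟩
      exact h1
    · apply Ideal.span_le.mpr
      intro q hq
      exact Ideal.subset_span (hWsub hq)
  have hWim : ∀ q ∈ W, ∃ h : A, h ∈ L ∧ h ≠ (0 : A) ∧ q = monomial (LM r (Φ h)) (1 : K) := by
    intro q hq
    obtain ⟨m, hm, rfl⟩ := hWsub hq
    obtain ⟨h, hhL, hh0, rfl⟩ := hm
    exact ⟨h, hhL, hh0, rfl⟩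
  choose f hf1 hf2 hf3 using hWim
  refine ⟨W.attach.image (fun q => f q.1 q.2), ?_, ?_, ?_⟩
  · intro g hg
    rw [Finset.coe_image] at hg
    obtain ⟨⟨q, hq⟩, -, rfl⟩ := hg
    exact hf1 q hq
  · intro h0
    rw [Finset.mem_image] at h0
    obtain ⟨⟨q, hq⟩, -, h0⟩ := h0
    exact hf2 _ _ h0
  · intro x hxL hx0
    have hx : (monomial (LM r (Φ x)) (1 : K) : MvPolynomial (Fin t) K) ∈ J :=
      Ideal.subset_span ⟨LM r (Φ x), ⟨x, hxL, hx0, rfl⟩, rfl⟩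
    set E₁ : Set (Mon t) := {m | m ∈ E₀ ∧ monomial m (1 : K) ∈ W} with hE₁
    have hWE : (fun m => monomial m (1 : K)) '' E₁ = (W : Set (MvPolynomial (Fin t) K)) := by
      apply Set.Subset.antisymm
      · rintro q ⟨m, hm, rfl⟩
        exact hm.2
      · intro q hq
        obtain ⟨m, hm, rfl⟩ := hWsub hq
        exact ⟨m, ⟨hm, hq⟩, rfl⟩
    have hx' : (monomial (LM r (Φ x)) (1 : K) : MvPolynomial (Fin t) K)
        ∈ Ideal.span ((fun m => monomial m (1 : K)) '' E₁) := by
      rw [hWE, ← hJW]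
      exact hx
    have hsupx : LM r (Φ x) ∈ (monomial (LM r (Φ x)) (1 : K) : MvPolynomial (Fin t) K).support := by
      rw [support_monomial]
      simp
    obtain ⟨m, hmE₁, hmle⟩ := MvPolynomial.mem_ideal_span_monomial_image.mp hx' _ hsupx
    have hmW : monomial m (1 : K) ∈ W := hmE₁.2
    refine ⟨f (monomial m (1 : K)) hmW, ?_, ?_⟩
    · rw [Finset.mem_image]
      exact ⟨⟨monomial m (1 : K), hmW⟩, Finset.mem_attach _ _, rfl⟩
    · have hm2 : m = LM r (Φ (f (monomial m (1 : K)) hmW)) :=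
        MvPolynomial.monomial_left_injective one_ne_zero (hf3 (monomial m (1 : K)) hmW)
      rw [← hm2]
      exact hmle

lemma UG_LMA_mono (r : TO (Mon t)) {H1 H2 : Set A} (h : H1 ⊆ H2) :
    LMAideal K A t Φ LM r H1 ≤ LMAideal K A t Φ LM r H2 :=
  Ideal.span_mono (by rintro q ⟨x, hx, h0, rfl⟩; exact ⟨x, h hx, h0, rfl⟩)

lemma UG_LMA_le (r : TO (Mon t)) (L : Submodule A A) (U : Set A)
    (G : Finset A) (hGU : (G : Set A) ⊆ U) (hG0 : (0 : A) ∉ G)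
    (hdiv : ∀ x ∈ L, x ≠ (0 : A) → ∃ g ∈ G, LM r (Φ g) ≤ LM r (Φ x)) :
    LMAideal K A t Φ LM r (L : Set A) ≤ LMAideal K A t Φ LM r U := by
  apply Ideal.span_le.mpr
  rintro q ⟨h, hhL, hh0, rfl⟩
  obtain ⟨g, hgG, hle⟩ := hdiv h hhL hh0
  obtain ⟨δ, hδ⟩ := le_iff_exists_add.mp hle
  have hgen : (monomial (LM r (Φ g)) (1 : K) : MvPolynomial (Fin t) K)
      ∈ LMAideal K A t Φ LM r U :=
    Ideal.subset_span ⟨g, hGU hgG, fun h0 => hG0 (h0 ▸ hgG), rfl⟩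
  have heq : (monomial (LM r (Φ h)) (1 : K) : MvPolynomial (Fin t) K)
      = monomial δ (1 : K) * monomial (LM r (Φ g)) (1 : K) := by
    rw [MvPolynomial.monomial_mul, one_mul, add_comm, ← hδ]
  show (monomial (LM r (Φ h)) (1 : K) : MvPolynomial (Fin t) K) ∈ LMAideal K A t Φ LM r U
  rw [heq]
  exact Ideal.mul_mem_left _ _ hgen

end UGmain

/-- Let `𝔗` be a nonempty set of total well-orderings on `N` that is closed in `TO(N)`, and
assume `A` is multiplicative on `𝔗`. Then every left ideal `L` of `A` admits a `𝔗`-universal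
Gröbner basis: a finite subset `U ⊆ L` such that, for every `≺ ∈ 𝔗`, `U` is a Gröbner basis of
`L` with respect to `≺`, i.e. `L = Σ_{u ∈ U} A·u` and `LM_≺(L) = LM_≺(U)`. -/
theorem exists_universal_groebner_basis (K A : Type*) [Field K] [Ring A] [Algebra K A]
    (t : ℕ) (ht : 1 ≤ t)
    (Φ : A ≃ₗ[K] MvPolynomial (Fin t) K)
    (LM : TO (Mon t) → MvPolynomial (Fin t) K → Mon t) (hLM : IsLM K t LM)
    (T : Set (TO (Mon t))) (hTne : T.Nonempty) (hTWO : ∀ r ∈ T, IsWO r)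
    (hTclosed : IsClosed T)
    (hmult : MultOn K A t Φ LM T)
    (L : Submodule A A) :
    ∃ U : Finset A, (U : Set A) ⊆ (L : Set A) ∧
      L = Submodule.span A (U : Set A) ∧
      ∀ r ∈ T, LMAideal K A t Φ LM r (L : Set A) = LMAideal K A t Φ LM r (U : Set A) := by
  classical
  obtain ⟨hdom, hadd⟩ := hmult
  have hΦ0 : ∀ x : A, Φ x ≠ 0 ↔ x ≠ 0 := fun x => not_congr (LinearEquiv.map_eq_zero_iff Φ)
  have hex : ∀ i : T, ∃ G : Finset A, (G : Set A) ⊆ (L : Set A) ∧ (0 : A) ∉ G ∧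
      ∀ x ∈ L, x ≠ (0 : A) → ∃ g ∈ G, LM i.1 (Φ g) ≤ LM i.1 (Φ x) :=
    fun i => UG_exists_G Φ LM hLM L i.1
  choose G hG1 hG2 hG3 using hex
  set V : T → Set (TO (Mon t)) := fun i =>
    ⋂ g ∈ G i, ⋂ m ∈ (Φ g).support, {r' : TO (Mon t) | r'.1 m (LM i.1 (Φ g))} with hV
  have hVopen : ∀ i, IsOpen (V i) := fun i =>
    isOpen_biInter_finset fun g _ => isOpen_biInter_finset fun m _ => UG_isOpen_sub _ _
  have hVmem : ∀ i : T, i.1 ∈ V i := by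
    intro i
    rw [hV]
    simp only [Set.mem_iInter, Set.mem_setOf_eq]
    intro g hg m hm
    have hg0 : g ≠ 0 := fun h => hG2 i (h ▸ hg)
    exact UG_lm_max LM hLM i.1 ((hΦ0 g).mpr hg0) hm
  have hcover : T ⊆ ⋃ i : T, V i := fun r hr => Set.mem_iUnion.mpr ⟨⟨r, hr⟩, hVmem ⟨r, hr⟩⟩
  have hTcomp : IsCompact T := hTclosed.isCompact
  obtain ⟨s, hs⟩ := hTcomp.elim_finite_subcover V hVopen hcover
  have hagree : ∀ i : T, ∀ r'' ∈ V i, ∀ g ∈ G i, LM r'' (Φ g) = LM i.1 (Φ g) := by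
    intro i r'' hr'' g hg
    have hg0 : g ≠ 0 := fun h => hG2 i (h ▸ hg)
    have hΦg : Φ g ≠ 0 := (hΦ0 g).mpr hg0
    apply UG_lm_unique LM hLM r'' hΦg (UG_lm_mem LM hLM i.1 hΦg)
    intro m hm
    rw [hV] at hr''
    simp only [Set.mem_iInter, Set.mem_setOf_eq] at hr''
    exact hr'' g hg m hm
  have hmain : ∀ i : T, ∀ r'' , r'' ∈ T → r'' ∈ V i →
      ∀ a ∈ L, a ≠ (0 : A) →
        a ∈ Submodule.span A ((G i : Finset A) : Set A) ∧
        ∃ g ∈ G i, LM r'' (Φ g) ≤ LM r'' (Φ a) := by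
    intro i r'' hr''T hr''V
    apply UG_key Φ LM hLM hdom r'' (UG_wf (hTWO r'' hr''T)) (hadd r'' hr''T) L (G i)
      (hG2 i) (hG1 i)
    intro x hxL hx0
    obtain ⟨g, hgG, hle⟩ := hG3 i x hxL hx0
    have hg0 : g ≠ 0 := fun h => hG2 i (h ▸ hgG)
    refine ⟨g, hgG, LM i.1 (Φ x), ?_, ?_⟩
    · exact UG_lm_mem LM hLM i.1 ((hΦ0 x).mpr hx0)
    · rw [hagree i r'' hr''V g hgG]
      exact hle
  set U : Finset A := s.biUnion (fun i => G i) with hU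
  have hGU : ∀ i ∈ s, ((G i : Finset A) : Set A) ⊆ (U : Set A) := by
    intro i hi g hg
    rw [Finset.mem_coe, hU, Finset.mem_biUnion]
    exact ⟨i, hi, hg⟩
  have hUL : (U : Set A) ⊆ (L : Set A) := by
    intro u hu
    rw [Finset.mem_coe, hU, Finset.mem_biUnion] at hu
    obtain ⟨i, -, hgi⟩ := hu
    exact hG1 i hgi
  obtain ⟨r₀, hr₀⟩ := hTne
  obtain ⟨i₀, hi₀s, hr₀V⟩ := Set.mem_iUnion₂.mp (hs hr₀)
  have hspan : L = Submodule.span A (U : Set A) := by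
    apply le_antisymm
    · intro a haL
      by_cases ha0 : a = 0
      · rw [ha0]; exact Submodule.zero_mem _
      · exact Submodule.span_mono (hGU i₀ hi₀s)
          (hmain i₀ r₀ hr₀ hr₀V a haL ha0).1
    · rw [Submodule.span_le]; exact hUL
  refine ⟨U, hUL, hspan, ?_⟩
  intro r'' hr''
  obtain ⟨i, his, hrV⟩ := Set.mem_iUnion₂.mp (hs hr'')
  apply le_antisymm
  · exact UG_LMA_le Φ LM r'' L (U : Set A) (G i) (hGU i his) (hG2 i)
      (fun x hxL hx0 => (hmain i r'' hr'' hrV x hxL hx0).2)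
  · exact UG_LMA_mono Φ LM r'' hUL
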